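/- For every real γ ≥ 1, ∫_{ℝ} ( γ / (π (1 + γ² x²)) ) · log( γ (1 + x²) / (1 + γ² x²) ) dx = log( (γ + 1)² / (4γ) ). Equivalently, the Kullback–Leibler divergence of the Cauchy distribution with location 0 and scale 1/γ from the standard Cauchy distribution equals log((γ+1)²/(4γ)). -/

import Mathlib

open Real MeasureTheory Set Filter Metric

lemma klc_pos1 (x : ℝ) : (0:ℝ) < 1 + x^2 := by positivity

lemma klc_log_le {t : ℝ} (ht : 0 < t) : Real.log t ≤ 4 * t ^ ((1:ℝ)/4) := by
  have h1 : Real.log (t ^ ((1:ℝ)/4)) ≤ t ^ ((1:ℝ)/4) - 1 :=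
    Real.log_le_sub_one_of_pos (rpow_pos_of_pos ht _)
  rw [Real.log_rpow ht] at h1
  nlinarith [rpow_pos_of_pos ht ((1:ℝ)/4)]

lemma klc_logdiv_le (x : ℝ) : Real.log (1+x^2) / (1+x^2) ≤ 4 * (1+x^2) ^ (-(3:ℝ)/4) := by
  have hp := klc_pos1 x
  have h1 : Real.log (1+x^2) ≤ 4 * (1+x^2) ^ ((1:ℝ)/4) := klc_log_le hp
  have h2 : (1+x^2) ^ (-(3:ℝ)/4) * (1+x^2) = (1+x^2) ^ ((1:ℝ)/4) := by
    nth_rewrite 2 [← Real.rpow_one (1+x^2)]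
    rw [← Real.rpow_add hp]
    norm_num
  rw [div_le_iff₀ hp]
  calc Real.log (1+x^2) ≤ 4 * (1+x^2) ^ ((1:ℝ)/4) := h1
    _ = 4 * (1+x^2) ^ (-(3:ℝ)/4) * (1+x^2) := by rw [mul_assoc, h2]

lemma klc_pow34 : Integrable (fun x : ℝ => (1+x^2) ^ (-(3:ℝ)/4)) := by
  have := integrable_rpow_neg_one_add_norm_sq (E := ℝ) (μ := volume) (r := 3/2)
    (by simp [Module.finrank_self]; norm_num)
  have h2 : (-(3/2) / 2 : ℝ) = -(3:ℝ)/4 := by norm_num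
  simpa [Real.norm_eq_abs, sq_abs, h2] using this

lemma klc_int_rpow : IntegrableOn (fun x : ℝ => x ^ (-(1:ℝ)/2)) (Ioc 0 1) := by
  have := intervalIntegral.intervalIntegrable_rpow' (a := 0) (b := 1)
    (r := -(1:ℝ)/2) (by norm_num)
  rwa [intervalIntegrable_iff_integrableOn_Ioc_of_le (by norm_num)] at this

lemma klc_abslog_Ioc : IntegrableOn (fun x : ℝ => |Real.log x|) (Ioc 0 1) := by
  refine (klc_int_rpow.const_mul 2).mono' ?_ ?_
  · exact (Real.measurable_log.abs).aestronglyMeasurable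
  · filter_upwards [ae_restrict_mem measurableSet_Ioc] with x hx
    have hx0 : 0 < x := hx.1
    have hlog : Real.log x ≤ 0 := Real.log_nonpos hx0.le hx.2
    have h1 : Real.log (x ^ (-(1:ℝ)/2)) ≤ x ^ (-(1:ℝ)/2) - 1 :=
      Real.log_le_sub_one_of_pos (rpow_pos_of_pos hx0 _)
    rw [Real.log_rpow hx0] at h1
    rw [Real.norm_eq_abs, abs_abs, abs_of_nonpos hlog]
    nlinarith [rpow_pos_of_pos hx0 (-(1:ℝ)/2)]

lemma klc_abslog_Icc : IntegrableOn (fun x : ℝ => |Real.log x|) (Icc (-1) 1) := by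
  have hI : Integrable ((Ioc (0:ℝ) 1).indicator (fun x => |Real.log x|)) := by
    rw [integrable_indicator_iff measurableSet_Ioc]; exact klc_abslog_Ioc
  have hneg := hI.comp_neg
  have hre : (fun x : ℝ => (Ioc (0:ℝ) 1).indicator (fun x => |Real.log x|) (-x))
      = (Ico (-1:ℝ) 0).indicator (fun x => |Real.log x|) := by
    ext x
    by_cases hx : x ∈ Ico (-1:ℝ) 0
    · rw [indicator_of_mem hx, indicator_of_mem (by constructor <;> [linarith [hx.2]; linarith [hx.1]] : -x ∈ Ioc (0:ℝ) 1)]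
      rw [Real.log_neg_eq_log]
    · rw [indicator_of_notMem hx, indicator_of_notMem]
      intro h
      exact hx ⟨by linarith [h.2], by linarith [h.1]⟩
  rw [hre] at hneg
  have h2 : IntegrableOn (fun x : ℝ => |Real.log x|) (Ico (-1) 0) := by
    rwa [integrable_indicator_iff measurableSet_Ico] at hneg
  have h0 : IntegrableOn (fun x : ℝ => |Real.log x|) ({0} : Set ℝ) := by
    rw [IntegrableOn, Measure.restrict_eq_zero.mpr (by simp)]
    exact integrable_zero_measure
  have := (h2.union klc_abslog_Ioc).union h0
  refine this.mono_set ?_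
  intro x hx
  rcases lt_trichotomy x 0 with h | h | h
  · exact Or.inl (Or.inl ⟨hx.1, h⟩)
  · exact Or.inr (by simp [h])
  · exact Or.inl (Or.inr ⟨h, hx.2⟩)

lemma klc_meas_master (c : ℝ) :
    Measurable (fun x : ℝ => (|Real.log (x^2)| + c + Real.log (1+x^2)) / (1+x^2)) := by
  apply Measurable.div
  · exact (((Real.measurable_log.comp (measurable_id.pow_const 2)).abs.add_const c).add
      (Real.measurable_log.comp ((measurable_id.pow_const 2).const_add 1)))
  · exact (measurable_id.pow_const 2).const_add 1

lemma klc_master (c : ℝ) (hc : 0 ≤ c) :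
    Integrable (fun x : ℝ => (|Real.log (x^2)| + c + Real.log (1+x^2)) / (1+x^2)) := by
  set B := fun x : ℝ => (|Real.log (x^2)| + c + Real.log (1+x^2)) / (1+x^2) with hB
  have hmeas := (klc_meas_master c).aestronglyMeasurable (μ := volume)
  have hBnn : ∀ x, 0 ≤ B x := by
    intro x
    have := Real.log_nonneg (by nlinarith [sq_nonneg x] : (1:ℝ) ≤ 1 + x^2)
    positivity
  -- on Icc (-1) 1
  have h1 : IntegrableOn B (Icc (-1) 1) := by
    refine ((klc_abslog_Icc.const_mul 2).add ((integrableOn_const_iff (C := c+1)).mpr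
      (Or.inr (by simp)))).mono' hmeas.restrict ?_
    filter_upwards [ae_restrict_mem measurableSet_Icc] with x hx
    have hp := klc_pos1 x
    have hx2 : x^2 ≤ 1 := by nlinarith [hx.1, hx.2, sq_nonneg (x-1), sq_nonneg (x+1)]
    have hlx : |Real.log (x^2)| = 2 * |Real.log x| := by
      rw [show (x:ℝ)^2 = x^2 from rfl, Real.log_pow]
      push_cast
      rw [abs_mul]; norm_num
    have hl2 : Real.log (1+x^2) ≤ Real.log 2 := by
      apply Real.log_le_log (by positivity); linarith
    have hl2' : Real.log 2 ≤ 1 := by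
      have := Real.log_le_sub_one_of_pos (by norm_num : (0:ℝ) < 2); linarith
    have hl0 : 0 ≤ Real.log (1+x^2) :=
      Real.log_nonneg (by nlinarith [sq_nonneg x])
    rw [Real.norm_eq_abs, abs_of_nonneg (hBnn x)]
    have hden : B x ≤ |Real.log (x^2)| + c + Real.log (1+x^2) := by
      rw [hB]
      exact div_le_self (by positivity) (by nlinarith [sq_nonneg x])
    calc B x ≤ |Real.log (x^2)| + c + Real.log (1+x^2) := hden
      _ ≤ 2 * |Real.log x| + (c + 1) := by rw [hlx]; linarith
  -- on complement
  have h2 : IntegrableOn B (Icc (-1) 1)ᶜ := by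
    refine (((integrable_inv_one_add_sq.const_mul c).add
      (klc_pow34.const_mul 8)).restrict).mono' hmeas.restrict ?_
    filter_upwards [ae_restrict_mem measurableSet_Icc.compl] with x hx
    have hp := klc_pos1 x
    have hx1 : 1 < x^2 := by
      rcases not_and_or.mp hx with h | h
      · push_neg at h; nlinarith
      · push_neg at h; nlinarith
    have hlog : |Real.log (x^2)| = Real.log (x^2) :=
      abs_of_nonneg (Real.log_nonneg hx1.le)
    have hle : Real.log (x^2) ≤ Real.log (1+x^2) :=
      Real.log_le_log (by positivity) (by linarith)
    rw [Real.norm_eq_abs, abs_of_nonneg (hBnn x)]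
    calc B x = (|Real.log (x^2)| + c + Real.log (1+x^2)) / (1+x^2) := rfl
      _ ≤ (c + 2 * Real.log (1+x^2)) / (1+x^2) := by
          apply (div_le_div_iff_of_pos_right hp).mpr; rw [hlog]; linarith
      _ = c * (1+x^2)⁻¹ + 2 * (Real.log (1+x^2) / (1+x^2)) := by
          rw [add_div]; ring
      _ ≤ c * (1+x^2)⁻¹ + 8 * (1+x^2) ^ (-(3:ℝ)/4) := by
          linarith [klc_logdiv_le x]
  have := h1.union h2
  rwa [union_compl_self, integrableOn_univ] at this

lemma klc_measJ (a : ℝ) :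
    Measurable (fun x : ℝ => Real.log (a^2+x^2) / (1+x^2)) := by
  apply Measurable.div
  · exact Real.measurable_log.comp ((measurable_id.pow_const 2).const_add (a^2))
  · exact (measurable_id.pow_const 2).const_add 1

lemma klc_dom {a M : ℝ} (haM : a^2 ≤ M^2) (h1 : 1 ≤ M) {x : ℝ} (hx : x ≠ 0) :
    ‖Real.log (a^2+x^2) / (1+x^2)‖ ≤
      (|Real.log (x^2)| + Real.log (M^2) + Real.log (1+x^2)) / (1+x^2) := by
  have hp := klc_pos1 x
  have hx2 : 0 < x^2 := by positivity
  have hM0 : (0:ℝ) < M^2 := by nlinarith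
  have hMlog : 0 ≤ Real.log (M^2) := Real.log_nonneg (by nlinarith)
  have hl0 : 0 ≤ Real.log (1+x^2) := Real.log_nonneg (by nlinarith [sq_nonneg x])
  have hlow : Real.log (x^2) ≤ Real.log (a^2+x^2) :=
    Real.log_le_log hx2 (by nlinarith [sq_nonneg a])
  have hup : Real.log (a^2+x^2) ≤ Real.log (M^2) + Real.log (1+x^2) := by
    have : Real.log (a^2+x^2) ≤ Real.log (M^2 * (1+x^2)) :=
      Real.log_le_log (by positivity) (by nlinarith [mul_nonneg (by nlinarith : (0:ℝ) ≤ M^2 - 1) (sq_nonneg x)])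
    rwa [Real.log_mul (ne_of_gt hM0) (ne_of_gt hp)] at this
  rw [norm_div, Real.norm_eq_abs, Real.norm_eq_abs, abs_of_pos hp]
  apply (div_le_div_iff_of_pos_right hp).mpr
  rw [abs_le]
  constructor
  · have := neg_abs_le (Real.log (x^2)); nlinarith
  · nlinarith [neg_abs_le (Real.log (x^2)), abs_nonneg (Real.log (x^2))]

lemma klc_integrableJ {a M : ℝ} (haM : a^2 ≤ M^2) (h1 : 1 ≤ M) :
    Integrable (fun x : ℝ => Real.log (a^2+x^2) / (1+x^2)) := by
  refine (klc_master (Real.log (M^2)) (Real.log_nonneg (by nlinarith))).mono'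
    ((klc_measJ a).aestronglyMeasurable) ?_
  filter_upwards [compl_mem_ae_iff.mpr (volume_singleton (a := (0:ℝ)))] with x hx
  exact klc_dom haM h1 hx

lemma klc_inv_image : (fun x : ℝ => x⁻¹) '' (Ioi 0) = Ioi 0 := by
  ext y
  constructor
  · rintro ⟨x, hx, rfl⟩; exact mem_Ioi.mpr (inv_pos.mpr (mem_Ioi.mp hx))
  · intro hy; exact ⟨y⁻¹, mem_Ioi.mpr (inv_pos.mpr (mem_Ioi.mp hy)), inv_inv y⟩

lemma klc_Ioi_zero : ∫ x : ℝ in Ioi 0, Real.log (x^2) / (1+x^2) = 0 := by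
  set f : ℝ → ℝ := fun x => Real.log (x^2) / (1+x^2) with hf
  have key := integral_image_eq_integral_abs_deriv_smul (f := fun x : ℝ => x⁻¹)
    (f' := fun x : ℝ => -(x^2)⁻¹) measurableSet_Ioi
    (fun x hx => (hasDerivAt_inv (ne_of_gt hx)).hasDerivWithinAt)
    (fun x hx y hy hxy => by
      have := congrArg (fun t : ℝ => t⁻¹) hxy
      simpa [inv_inv] using this) f
  rw [klc_inv_image] at key
  have congr2 : ∫ x : ℝ in Ioi 0, |(-(x^2)⁻¹)| • f x⁻¹ = ∫ x : ℝ in Ioi 0, -f x := by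
    apply setIntegral_congr_fun measurableSet_Ioi
    intro x hx
    have hx0 : (0:ℝ) < x := hx
    have hx2 : (0:ℝ) < x^2 := by positivity
    have h1 : (1 + (x⁻¹)^2) = (x^2 + 1)/x^2 := by field_simp
    have h2 : Real.log ((x⁻¹)^2) = -Real.log (x^2) := by
      rw [← Real.log_inv]; congr 1; field_simp
    show |(-(x ^ 2)⁻¹)| • f x⁻¹ = -f x
    rw [smul_eq_mul, hf]
    simp only [abs_neg, abs_inv, abs_of_pos hx2]
    rw [h1, h2]
    field_simp
    ring
  rw [congr2, integral_neg] at key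
  linarith

lemma klc_J_zero : ∫ x : ℝ, Real.log ((0:ℝ)^2+x^2) / (1+x^2) = 0 := by
  have h1 : ∀ x : ℝ, Real.log ((0:ℝ)^2+x^2) / (1+x^2)
      = (fun y : ℝ => Real.log (y^2) / (1+y^2)) |x| := by
    intro x; simp [sq_abs]
  have h2 : ∫ x : ℝ, Real.log ((0:ℝ)^2+x^2) / (1+x^2)
      = ∫ x : ℝ, (fun y : ℝ => Real.log (y^2) / (1+y^2)) |x| := by
    congr 1; exact funext h1
  rw [h2, integral_comp_abs (f := fun y : ℝ => Real.log (y^2) / (1+y^2)),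
    klc_Ioi_zero, mul_zero]

lemma klc_integrable_inv {a : ℝ} (ha : 0 < a) :
    Integrable (fun x : ℝ => (a^2+x^2)⁻¹) := by
  refine (integrable_inv_one_add_sq.const_mul ((min (a^2) 1)⁻¹)).mono'
    (((measurable_id.pow_const 2).const_add (a^2)).inv.aestronglyMeasurable) ?_
  filter_upwards with x
  have hm : 0 < min (a^2) 1 := lt_min (by positivity) one_pos
  have h1 : min (a^2) 1 * (1+x^2) ≤ a^2 + x^2 := by
    have h2 : min (a^2) 1 ≤ a^2 := min_le_left _ _
    have h3 : min (a^2) 1 ≤ 1 := min_le_right _ _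
    nlinarith [sq_nonneg x]
  rw [Real.norm_eq_abs, abs_of_pos (by positivity : (0:ℝ) < (a^2+x^2)⁻¹)]
  rw [← mul_inv]
  exact inv_anti₀ (by positivity) h1

lemma klc_integral_inv {a : ℝ} (ha : 0 < a) :
    ∫ x : ℝ, (a^2+x^2)⁻¹ = π / a := by
  have h1 : ∀ x : ℝ, (a^2+x^2)⁻¹ = a⁻¹ * a⁻¹ * (1+(x*a⁻¹)^2)⁻¹ := by
    intro x
    rw [mul_pow]
    field_simp
  simp_rw [h1]
  rw [integral_const_mul, MeasureTheory.Measure.integral_comp_mul_right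
    (fun y : ℝ => (1+y^2)⁻¹) a⁻¹, integral_univ_inv_one_add_sq]
  rw [inv_inv, abs_of_pos ha, smul_eq_mul]
  field_simp

lemma klc_measF' (b : ℝ) :
    Measurable (fun x : ℝ => 2*b/(b^2+x^2)/(1+x^2)) := by
  apply Measurable.div
  · exact (measurable_const.div ((measurable_id.pow_const 2).const_add (b^2)))
  · exact (measurable_id.pow_const 2).const_add 1

lemma klc_integrableF' {a : ℝ} (ha : 0 < a) :
    Integrable (fun x : ℝ => 2*a/(a^2+x^2)/(1+x^2)) := by
  refine ((klc_integrable_inv ha).const_mul (2*a)).mono'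
    (klc_measF' a).aestronglyMeasurable ?_
  filter_upwards with x
  have h1 : (0:ℝ) < a^2+x^2 := by positivity
  have h2 := klc_pos1 x
  rw [Real.norm_eq_abs, abs_of_nonneg (by positivity)]
  calc 2*a/(a^2+x^2)/(1+x^2) ≤ 2*a/(a^2+x^2) :=
        div_le_self (by positivity) (by nlinarith [sq_nonneg x])
    _ = 2*a*(a^2+x^2)⁻¹ := div_eq_mul_inv _ _

lemma klc_deriv_integral {a : ℝ} (ha : 0 < a) (ha1 : a ≠ 1) :
    ∫ x : ℝ, 2*a/(a^2+x^2)/(1+x^2) = 2*π/(a+1) := by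
  have hne : a^2 - 1 ≠ 0 := by
    intro h
    have : a = 1 ∨ a = -1 := by
      have : (a-1)*(a+1) = 0 := by ring_nf; linarith
      rcases mul_eq_zero.mp this with h | h
      · left; linarith
      · right; linarith
    rcases this with h | h
    · exact ha1 h
    · linarith
  have hpt : ∀ x : ℝ, 2*a/(a^2+x^2)/(1+x^2)
      = (2*a/(a^2-1)) * ((1+x^2)⁻¹ - (a^2+x^2)⁻¹) := by
    intro x
    have h1 : (0:ℝ) < a^2+x^2 := by positivity
    have h2 := klc_pos1 x
    field_simp
    ring
  simp_rw [hpt]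
  rw [integral_const_mul, integral_sub integrable_inv_one_add_sq (klc_integrable_inv ha),
    integral_univ_inv_one_add_sq, klc_integral_inv ha]
  field_simp
  ring

lemma klc_hasDeriv {a : ℝ} (ha : 0 < a) :
    HasDerivAt (fun b : ℝ => ∫ x : ℝ, Real.log (b^2+x^2) / (1+x^2))
      (∫ x : ℝ, 2*a/(a^2+x^2)/(1+x^2)) a := by
  have hM : a^2 ≤ (max a 1)^2 := by
    have := le_max_left a 1
    nlinarith [le_max_right a 1]
  have key := hasDerivAt_integral_of_dominated_loc_of_deriv_le
    (F := fun b x => Real.log (b^2+x^2) / (1+x^2))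
    (F' := fun b x => 2*b/(b^2+x^2)/(1+x^2))
    (x₀ := a) (s := ball a (a/2)) (bound := fun x => (12/a) * (1+x^2)⁻¹)
    (ball_mem_nhds a (by linarith : (0:ℝ) < a/2))
    (Eventually.of_forall fun b => (klc_measJ b).aestronglyMeasurable)
    (klc_integrableJ hM (le_max_right a 1))
    ((klc_measF' a).aestronglyMeasurable)
    ?_ ((integrable_inv_one_add_sq.const_mul (12/a))) ?_
  · exact key.2
  · filter_upwards with x
    intro b hb
    rw [Metric.mem_ball, Real.dist_eq, abs_lt] at hb
    have hb1 : a/2 < b := by linarith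
    have hb2 : b < 3*a/2 := by linarith
    have hbx : (0:ℝ) < b^2+x^2 := by nlinarith [sq_nonneg x]
    have h2 := klc_pos1 x
    rw [Real.norm_eq_abs,
      abs_of_nonneg (le_of_lt (div_pos (div_pos (by linarith) hbx) h2))]
    rw [div_le_iff₀ h2]
    have hsimp : (12/a) * (1+x^2)⁻¹ * (1+x^2) = 12/a := by field_simp
    rw [hsimp, div_le_div_iff₀ hbx (by linarith)]
    nlinarith [sq_nonneg x, sq_nonneg (b-a)]
  · filter_upwards with x
    intro b hb
    rw [Metric.mem_ball, Real.dist_eq, abs_lt] at hb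
    have hb1 : (0:ℝ) < b := by linarith
    have hbx : (0:ℝ) < b^2+x^2 := by positivity
    have hd1 : HasDerivAt (fun b : ℝ => b^2 + x^2) (2*b) b := by
      simpa using (hasDerivAt_pow 2 b).add_const (x^2)
    have hd2 : HasDerivAt (fun b : ℝ => Real.log (b^2+x^2)) ((b^2+x^2)⁻¹ * (2*b)) b :=
      by have := (Real.hasDerivAt_log (ne_of_gt hbx)).comp b hd1; exact this
    have := hd2.div_const (1+x^2)
    convert this using 1
    · rfl
    · ring

noncomputable def klcJ (a : ℝ) : ℝ := ∫ x : ℝ, Real.log (a^2+x^2) / (1+x^2)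
noncomputable def klcPhi (a : ℝ) : ℝ := klcJ a - 2*π*Real.log (a+1)

lemma klc_J_cont : ContinuousOn klcJ (Ici 0) := by
  intro a₀ ha₀
  set M : ℝ := a₀ + 1 with hM
  have hM1 : 1 ≤ M := by simp only [hM]; rw [mem_Ici] at ha₀; linarith
  apply continuousWithinAt_of_dominated
    (bound := fun x => (|Real.log (x^2)| + Real.log (M^2) + Real.log (1+x^2)) / (1+x^2))
  · exact Eventually.of_forall fun a => (klc_measJ a).aestronglyMeasurable
  · have hev : Ici (0:ℝ) ∩ Iio M ∈ nhdsWithin a₀ (Ici 0) := by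
      apply inter_mem self_mem_nhdsWithin
      exact mem_nhdsWithin_of_mem_nhds (Iio_mem_nhds (by simp [hM]))
    filter_upwards [hev] with a ha
    have ha1 := mem_Ici.mp ha.1
    have ha2 := mem_Iio.mp ha.2
    filter_upwards [compl_mem_ae_iff.mpr (volume_singleton (a := (0:ℝ)))] with x hx
    have hx' : x ≠ 0 := by simpa using hx
    exact klc_dom (by nlinarith : a^2 ≤ M^2) hM1 hx'
  · exact klc_master _ (Real.log_nonneg (by nlinarith))
  · filter_upwards [compl_mem_ae_iff.mpr (volume_singleton (a := (0:ℝ)))] with x hx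
    have hx' : x ≠ 0 := by simpa using hx
    apply ContinuousAt.continuousWithinAt
    have h1 : ContinuousAt (fun a : ℝ => a^2+x^2) a₀ := by fun_prop
    have h2 : a₀^2+x^2 ≠ 0 := by
      have : (0:ℝ) < x^2 := by positivity
      nlinarith [sq_nonneg a₀]
    exact (h1.log h2).div_const _

lemma klc_phi_deriv {a : ℝ} (ha : 0 < a) (ha1 : a ≠ 1) : HasDerivAt klcPhi 0 a := by
  have h1 : HasDerivAt klcJ (2*π/(a+1)) a := by
    have := klc_hasDeriv ha
    rw [klc_deriv_integral ha ha1] at this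
    exact this
  have h2 : HasDerivAt (fun a : ℝ => 2*π*Real.log (a+1)) (2*π*((a+1)⁻¹*1)) a := by
    exact ((Real.hasDerivAt_log (by simp; linarith)).comp a
      ((hasDerivAt_id a).add_const 1)).const_mul (2*π)
  have h3 := h1.sub h2
  have : 2*π/(a+1) - 2*π*((a+1)⁻¹*1) = 0 := by field_simp; ring
  rw [this] at h3
  exact h3

lemma klc_phi_const {l u : ℝ} (hl : 0 ≤ l) (hlu : l ≤ u)
    (hni : ∀ a : ℝ, l < a → a < u → a ≠ 1) : klcPhi u = klcPhi l := by
  have hcJ : ContinuousOn klcPhi (Icc l u) := by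
    apply ContinuousOn.sub
    · exact klc_J_cont.mono (fun x hx => le_trans hl hx.1)
    · apply continuousOn_const.mul
      apply ContinuousOn.log
      · fun_prop
      · intro x hx; have := hx.1; intro h; linarith [hl]
  have hd : ∀ a ∈ interior (Icc l u), HasDerivAt klcPhi 0 a := by
    rw [interior_Icc]
    intro a ha
    exact klc_phi_deriv (lt_of_le_of_lt hl ha.1) (hni a ha.1 ha.2)
  have hdiff : DifferentiableOn ℝ klcPhi (interior (Icc l u)) :=
    fun a ha => ((hd a ha).differentiableAt).differentiableWithinAt
  have hmono : MonotoneOn klcPhi (Icc l u) :=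
    monotoneOn_of_deriv_nonneg (convex_Icc l u) hcJ hdiff
      (fun a ha => by rw [(hd a ha).deriv])
  have hanti : AntitoneOn klcPhi (Icc l u) :=
    antitoneOn_of_deriv_nonpos (convex_Icc l u) hcJ hdiff
      (fun a ha => by rw [(hd a ha).deriv])
  have h1 := hmono (left_mem_Icc.mpr hlu) (right_mem_Icc.mpr hlu) hlu
  have h2 := hanti (left_mem_Icc.mpr hlu) (right_mem_Icc.mpr hlu) hlu
  linarith

lemma klc_J_eq {a : ℝ} (ha : 1 ≤ a) : klcJ a = 2*π*Real.log (a+1) := by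
  have h0 : klcPhi 0 = 0 := by
    simp only [klcPhi, klcJ]
    rw [klc_J_zero]
    norm_num
  have h1 : klcPhi 1 = 0 := by
    rw [klc_phi_const (le_refl 0) zero_le_one (fun a h1 h2 => ne_of_lt h2), h0]
  have h2 : klcPhi a = 0 := by
    rw [klc_phi_const zero_le_one ha (fun b hb _ => ne_of_gt hb), h1]
  have := h2
  simp only [klcPhi] at this
  linarith

/-- For every real `γ ≥ 1`,
`∫ x, (γ / (π (1 + γ² x²))) * log (γ (1 + x²) / (1 + γ² x²)) dx = log ((γ + 1)² / (4γ))`: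
the Kullback–Leibler divergence of the Cauchy distribution with location `0` and scale
`1/γ` from the standard Cauchy distribution. -/
theorem kl_cauchy_one_dim (γ : ℝ) (hγ : 1 ≤ γ) :
    ∫ x : ℝ, (γ / (π * (1 + γ ^ 2 * x ^ 2))) *
        Real.log (γ * (1 + x ^ 2) / (1 + γ ^ 2 * x ^ 2)) =
      Real.log ((γ + 1) ^ 2 / (4 * γ)) := by
  have hγ0 : (0:ℝ) < γ := by linarith
  have hπ := Real.pi_pos
  set h : ℝ → ℝ := fun u => (γ / (π * (1 + u^2))) *
    Real.log ((γ^2+u^2) / (γ * (1+u^2))) with hh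
  have step1 : ∀ x : ℝ, (γ / (π * (1 + γ ^ 2 * x ^ 2))) *
      Real.log (γ * (1 + x ^ 2) / (1 + γ ^ 2 * x ^ 2)) = h (γ * x) := by
    intro x
    have hp : (0:ℝ) < 1 + γ^2*x^2 := by positivity
    have harg : γ * (1 + x ^ 2) / (1 + γ ^ 2 * x ^ 2)
        = (γ^2+γ^2*x^2) / (γ * (1+γ^2*x^2)) := by
      rw [div_eq_div_iff (ne_of_gt hp) (by positivity)]; ring
    simp only [hh, mul_pow]
    rw [harg]
  simp_rw [step1]
  rw [MeasureTheory.Measure.integral_comp_mul_left h γ]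
  -- compute ∫ h
  have hsplit : ∀ u : ℝ, h u = (γ/π) * (Real.log (γ^2+u^2) / (1+u^2)
      - (Real.log γ) * (1+u^2)⁻¹ - Real.log (1+u^2) / (1+u^2)) := by
    intro u
    have hp : (0:ℝ) < 1 + u^2 := by positivity
    have hq : (0:ℝ) < γ^2 + u^2 := by positivity
    simp only [hh]
    rw [Real.log_div (ne_of_gt hq) (by positivity), Real.log_mul (ne_of_gt hγ0) (ne_of_gt hp)]
    simp only [div_eq_mul_inv, mul_inv]
    ring
  simp_rw [hsplit]
  have int1 : Integrable (fun u : ℝ => Real.log (γ^2+u^2) / (1+u^2)) :=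
    klc_integrableJ (le_refl _) hγ
  have int2 : Integrable (fun u : ℝ => (Real.log γ) * (1+u^2)⁻¹) :=
    integrable_inv_one_add_sq.const_mul _
  have int3 : Integrable (fun u : ℝ => Real.log (1+u^2) / (1+u^2)) := by
    have := klc_integrableJ (a := 1) (M := 1) (le_refl _) (le_refl _)
    simpa using this
  rw [integral_const_mul,
    show (∫ u : ℝ, (Real.log (γ^2+u^2) / (1+u^2) - Real.log γ * (1+u^2)⁻¹
        - Real.log (1+u^2) / (1+u^2)))
      = (∫ u : ℝ, (Real.log (γ^2+u^2) / (1+u^2) - Real.log γ * (1+u^2)⁻¹))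
        - ∫ u : ℝ, Real.log (1+u^2) / (1+u^2) from integral_sub (int1.sub int2) int3,
    integral_sub int1 int2, integral_const_mul, integral_univ_inv_one_add_sq]
  have e1 : ∫ u : ℝ, Real.log (γ^2+u^2) / (1+u^2) = 2*π*Real.log (γ+1) := klc_J_eq hγ
  have e3 : ∫ u : ℝ, Real.log (1+u^2) / (1+u^2) = 2*π*Real.log 2 := by
    have := klc_J_eq (le_refl 1)
    simp only [klcJ] at this
    norm_num at this
    convert this using 2
  rw [e1, e3]
  have rhs : Real.log ((γ + 1) ^ 2 / (4 * γ))
      = 2*Real.log (γ+1) - Real.log γ - 2*Real.log 2 := by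
    rw [Real.log_div (by positivity) (by positivity), Real.log_pow,
      Real.log_mul (by norm_num) (ne_of_gt hγ0),
      show (4:ℝ) = 2^2 by norm_num, Real.log_pow]
    push_cast
    ring
  rw [rhs, abs_inv, abs_of_pos hγ0, smul_eq_mul]
  field_simp
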